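/- arXiv:1711.03466 — 3 statements merged into one kernel-verified Lean document; each statement's English description precedes it below -/
import Mathlib

section
/- Let α ≥ 2, let s be a rational strategy profile forming a star, and let s' = (s'_K, s_{−K}) be a deviation by coalition K with c_i(s') < c_i(s) for all i ∈ K. Then for every leaf player i ∈ K (deg_{G(s)}(i) = 1), we have f(s',i) > f(s,i) and f(s',i) − f(s,i) ≥ |s'_i| − |s_i| + 1. -/
open SimpleGraph ENNReal Finset

/-- A strategy profile: each player chooses a set of other players. -/
abbrev Profile (n : ℕ) := Fin n → Finset (Fin n)

/-- Validity: no player buys an edge to herself. -/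
def Valid {n : ℕ} (s : Profile n) : Prop := ∀ i, i ∉ s i

/-- The graph formed by a strategy profile: `{i,j}` is an edge iff `j ∈ s i` or `i ∈ s j`. -/
def NCGraph {n : ℕ} (s : Profile n) : SimpleGraph (Fin n) :=
  SimpleGraph.fromRel (fun i j => j ∈ s i)

instance {n : ℕ} (s : Profile n) : DecidableRel (NCGraph s).Adj := fun i j =>
  decidable_of_iff (i ≠ j ∧ (j ∈ s i ∨ i ∈ s j))
    (SimpleGraph.fromRel_adj (fun a b => b ∈ s a) i j).symm

/-- Distance cost of player `i`: sum of (extended) distances to all players. -/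
noncomputable def dCost {n : ℕ} (s : Profile n) (i : Fin n) : ℝ≥0∞ :=
  ∑ j, ((NCGraph s).edist i j : ℝ≥0∞)

/-- Total cost of player `i` in the network creation game with parameter `α`. -/
noncomputable def cost {n : ℕ} (α : ℝ) (s : Profile n) (i : Fin n) : ℝ≥0∞ :=
  ENNReal.ofReal α * (s i).card + dCost s i

/-- Social cost: sum of all players' costs. -/
noncomputable def socialCost {n : ℕ} (α : ℝ) (s : Profile n) : ℝ≥0∞ :=
  ∑ i, cost α s i

/-- A profile is rational if no edge is bought by both of its endpoints. -/
def Rational {n : ℕ} (s : Profile n) : Prop := ∀ i j, j ∈ s i → i ∉ s j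

/-- Pure Nash equilibrium. -/
def IsNashEq {n : ℕ} (α : ℝ) (s : Profile n) : Prop :=
  ∀ (i : Fin n) (t : Finset (Fin n)), i ∉ t →
    cost α s i ≤ cost α (Function.update s i t) i

/-- Strong equilibrium: no nonempty coalition has a joint deviation strictly
decreasing every member's cost. -/
def IsStrongEq {n : ℕ} (α : ℝ) (s : Profile n) : Prop :=
  ∀ (K : Finset (Fin n)) (s' : Profile n), K.Nonempty → Valid s' →
    (∀ i ∉ K, s' i = s i) → ∃ i ∈ K, cost α s i ≤ cost α s' i

/-- A star graph: one center adjacent to all other vertices, and no other edges. -/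
def IsStar {V : Type*} (G : SimpleGraph V) : Prop :=
  ∃ c : V, ∀ i j : V, G.Adj i j ↔ i ≠ j ∧ (i = c ∨ j = c)

lemma two_le_of_ne {x : ℕ∞} (h0 : x ≠ 0) (h1 : x ≠ 1) : 2 ≤ x := by
  cases x with
  | top => exact le_top
  | coe m =>
    have h0' : m ≠ 0 := by exact_mod_cast h0
    have h1' : m ≠ 1 := by exact_mod_cast h1
    exact_mod_cast (by omega : 2 ≤ m)

/-- For `α ≥ 2` and a rational star profile, any leaf player in a strictly
improving coalition strictly increases her free-riding value, by at least
`|s'_i| − |s_i| + 1`. -/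
theorem stmt11 {n : ℕ} (hn : 3 ≤ n) (α : ℝ) (hα : 2 ≤ α)
    (s : Profile n) (hv : Valid s) (hr : Rational s) (hstar : IsStar (NCGraph s))
    (K : Finset (Fin n)) (s' : Profile n) (hv' : Valid s')
    (hoff : ∀ i ∉ K, s' i = s i)
    (himp : ∀ i ∈ K, cost α s' i < cost α s i)
    (i : Fin n) (hiK : i ∈ K) (hleaf : (NCGraph s).degree i = 1) :
    ((NCGraph s).degree i : ℤ) - (s i).card <
      ((NCGraph s').degree i : ℤ) - (s' i).card ∧
    (((NCGraph s').degree i : ℤ) - (s' i).card) -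
        (((NCGraph s).degree i : ℤ) - (s i).card) ≥
      ((s' i).card : ℤ) - (s i).card + 1 := by
  obtain ⟨c, hc⟩ := hstar
  have hα0 : (0:ℝ) ≤ α := by linarith
  set G := NCGraph s with hG
  set G' := NCGraph s' with hG'
  set a := (s i).card with ha
  set b := (s' i).card with hb
  set D := G'.degree i with hDdef
  -- i ≠ c
  have hic : i ≠ c := by
    intro h
    have hnb : G.neighborFinset i = Finset.univ.erase i := by
      ext j
      simp only [SimpleGraph.mem_neighborFinset, hc, Finset.mem_erase, Finset.mem_univ, and_true]
      subst h
      constructor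
      · rintro ⟨h1, _⟩; exact h1.symm
      · intro h1; exact ⟨h1.symm, Or.inl rfl⟩
    have : G.degree i = n - 1 := by
      rw [SimpleGraph.degree, hnb, Finset.card_erase_of_mem (Finset.mem_univ i),
        Finset.card_univ, Fintype.card_fin]
    rw [hleaf] at this
    omega
  -- edist facts in the star
  have hedic : G.edist i c = 1 :=
    SimpleGraph.edist_eq_one_iff_adj.mpr ((hc i c).mpr ⟨hic, Or.inr rfl⟩)
  have hed2 : ∀ j, G.edist i j ≤ 2 := by
    intro j
    by_cases hji : j = i
    · subst hji; simp [SimpleGraph.edist_self]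
    by_cases hjc : j = c
    · subst hjc; rw [hedic]; exact one_le_two
    have hcj : G.edist c j = 1 :=
      SimpleGraph.edist_eq_one_iff_adj.mpr ((hc c j).mpr ⟨fun h => hjc h.symm, Or.inl rfl⟩)
    calc G.edist i j ≤ G.edist i c + G.edist c j := SimpleGraph.edist_triangle
      _ = 2 := by rw [hedic, hcj]; rfl
  -- upper bound on dCost s i
  have hsub : ({i, c} : Finset (Fin n)) ⊆ Finset.univ := Finset.subset_univ _
  have hdle : dCost s i ≤ ((2*(n-2) + 1 : ℕ) : ℝ≥0∞) := by
    have hsplit := Finset.sum_sdiff (f := fun j => ((G.edist i j : ℝ≥0∞))) hsub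
    have h1 : ∑ j ∈ ({i, c} : Finset (Fin n)), (G.edist i j : ℝ≥0∞) = 1 := by
      rw [Finset.sum_pair hic]
      simp [SimpleGraph.edist_self, hedic]
    have h2 : ∑ j ∈ Finset.univ \ ({i, c} : Finset (Fin n)), (G.edist i j : ℝ≥0∞)
        ≤ (Finset.univ \ ({i, c} : Finset (Fin n))).card • (2 : ℝ≥0∞) := by
      apply Finset.sum_le_card_nsmul
      intro j _
      exact_mod_cast hed2 j
    have hcard : (Finset.univ \ ({i, c} : Finset (Fin n))).card = n - 2 := by
      rw [Finset.card_sdiff_of_subset hsub, Finset.card_univ, Fintype.card_fin, Finset.card_pair hic]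
    rw [dCost, ← hsplit]
    calc _ ≤ (Finset.univ \ ({i, c} : Finset (Fin n))).card • (2 : ℝ≥0∞) + 1 :=
          add_le_add h2 h1.le
      _ = ((2*(n-2) + 1 : ℕ) : ℝ≥0∞) := by
          rw [hcard]; push_cast [nsmul_eq_mul]; ring
  have hcostle : cost α s i ≤ ENNReal.ofReal α * a + ((2*(n-2) + 1 : ℕ) : ℝ≥0∞) :=
    add_le_add_right hdle _
  have hfin : ENNReal.ofReal α * a + ((2*(n-2) + 1 : ℕ) : ℝ≥0∞) ≠ ⊤ := by
    simp [ENNReal.mul_eq_top]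
  have hcost' := himp i hiK
  have hfin' : dCost s' i ≠ ⊤ := by
    intro h
    have : cost α s' i = ⊤ := by rw [cost, h, add_top]
    rw [this] at hcost'
    exact (lt_irrefl _ (lt_of_le_of_lt (le_top.trans_eq rfl) (hcost'.trans_le (hcostle.trans (le_of_eq rfl))))).elim
  -- D ≥ 1
  have hD1 : 1 ≤ D := by
    by_contra h
    have hD0 : D = 0 := by omega
    obtain ⟨j, hj⟩ := Fintype.exists_ne_of_one_lt_card (by rw [Fintype.card_fin]; omega) i
    have hnr : ¬ G'.Reachable i j := by
      intro hrch
      obtain ⟨w⟩ := hrch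
      cases w with
      | nil => exact hj rfl
      | cons hadj p =>
        have : 0 < G'.degree i := (SimpleGraph.degree_pos_iff_exists_adj G' i).mpr ⟨_, hadj⟩
        omega
    have htop : (G'.edist i j : ℝ≥0∞) = ⊤ := by
      rw [SimpleGraph.edist_eq_top_of_not_reachable hnr]; rfl
    apply hfin'
    refine top_le_iff.mp ?_
    rw [← htop]
    exact Finset.single_le_sum (f := fun j => ((G'.edist i j : ℝ≥0∞)))
      (fun _ _ => zero_le) (Finset.mem_univ j)
  -- D + 1 ≤ n
  have hDn : D + 1 ≤ n := by
    have := G'.degree_lt_card_verts i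
    rw [Fintype.card_fin] at this
    omega
  obtain ⟨m, hm⟩ := Nat.exists_eq_add_of_le hDn
  -- lower bound on dCost s' i
  set N := G'.neighborFinset i with hN
  have hiN : i ∉ N := by simp [hN]
  have hsub' : insert i N ⊆ Finset.univ := Finset.subset_univ _
  have hdge : ((2*m + D : ℕ) : ℝ≥0∞) ≤ dCost s' i := by
    have hsplit := Finset.sum_sdiff (f := fun j => ((G'.edist i j : ℝ≥0∞))) hsub'
    have h1 : (D : ℝ≥0∞) ≤ ∑ j ∈ insert i N, (G'.edist i j : ℝ≥0∞) := by
      rw [Finset.sum_insert hiN]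
      refine le_add_of_nonneg_of_le zero_le ?_
      have hle : ∀ j ∈ N, (1:ℝ≥0∞) ≤ (G'.edist i j : ℝ≥0∞) := by
        intro j hj
        have hadj : G'.Adj i j := by rwa [← SimpleGraph.mem_neighborFinset]
        rw [SimpleGraph.edist_eq_one_iff_adj.mpr hadj]
        simp
      have hcs := Finset.card_nsmul_le_sum N (fun j => ((G'.edist i j : ℝ≥0∞))) 1 hle
      have hND : N.card = D := rfl
      rw [hND] at hcs
      simpa using hcs
    have h2 : (m • (2:ℝ≥0∞)) ≤
        ∑ j ∈ Finset.univ \ insert i N, (G'.edist i j : ℝ≥0∞) := by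
      have hcard : (Finset.univ \ insert i N).card = m := by
        rw [Finset.card_sdiff_of_subset hsub', Finset.card_univ, Fintype.card_fin,
          Finset.card_insert_of_notMem hiN]
        have : N.card = D := rfl
        omega
      have hle : ∀ j ∈ Finset.univ \ insert i N, (2:ℝ≥0∞) ≤ (G'.edist i j : ℝ≥0∞) := by
        intro j hj
        simp only [Finset.mem_sdiff, Finset.mem_insert, not_or] at hj
        obtain ⟨-, hji, hjN⟩ := hj
        have h0 : G'.edist i j ≠ 0 := by
          rw [Ne, SimpleGraph.edist_eq_zero_iff]
          exact fun h => hji h.symm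
        have h1' : G'.edist i j ≠ 1 := by
          rw [Ne, SimpleGraph.edist_eq_one_iff_adj]
          intro hadj
          exact hjN (by rwa [SimpleGraph.mem_neighborFinset])
        exact_mod_cast two_le_of_ne h0 h1'
      have hcs := Finset.card_nsmul_le_sum (Finset.univ \ insert i N)
        (fun j => ((G'.edist i j : ℝ≥0∞))) 2 hle
      rw [hcard] at hcs
      simpa using hcs
    rw [dCost, ← hsplit]
    calc ((2*m + D : ℕ) : ℝ≥0∞) = m • (2:ℝ≥0∞) + (D : ℝ≥0∞) := by
          push_cast [nsmul_eq_mul]; ring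
      _ ≤ _ := add_le_add h2 h1
  -- chain of inequalities
  have hchain : ENNReal.ofReal α * b + ((2*m + D : ℕ) : ℝ≥0∞) <
      ENNReal.ofReal α * a + ((2*(n-2) + 1 : ℕ) : ℝ≥0∞) :=
    lt_of_le_of_lt (add_le_add_right hdge _) (lt_of_lt_of_le hcost' hcostle)
  have conv : ∀ (x k : ℕ), ENNReal.ofReal α * (x:ℝ≥0∞) + (k:ℝ≥0∞)
      = ENNReal.ofReal (α * x + k) := by
    intro x k
    rw [ENNReal.ofReal_add (by positivity) (Nat.cast_nonneg k), ENNReal.ofReal_mul hα0,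
      ENNReal.ofReal_natCast, ENNReal.ofReal_natCast]
  rw [conv, conv] at hchain
  have hreal : α * b + (2*m + D : ℕ) < α * a + (2*(n-2) + 1 : ℕ) :=
    (ENNReal.ofReal_lt_ofReal_iff_of_nonneg (by positivity)).mp hchain
  have ha1 : a ≤ 1 := by
    have haN : s i ⊆ G.neighborFinset i := by
      intro j hj
      rw [SimpleGraph.mem_neighborFinset]
      have hji : i ≠ j := fun h => hv i (h ▸ hj)
      rw [hG, NCGraph, SimpleGraph.fromRel_adj]
      exact ⟨hji, Or.inl hj⟩
    calc a ≤ (G.neighborFinset i).card := Finset.card_le_card haN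
      _ = 1 := hleaf
  -- final arithmetic
  rw [hleaf]
  have hmn : 2*(n-2) + 1 = 2*D + 2*m - 1 := by omega
  rw [hmn] at hreal
  have hDm2 : 1 ≤ 2*D + 2*m := by omega
  have hreal2 : α * b + (2*(m:ℝ) + D) < α * a + (2*D + 2*m - 1) := by
    have h1 : ((2*m + D : ℕ) : ℝ) = 2*(m:ℝ) + D := by push_cast; ring
    have h2 : ((2*D + 2*m - 1 : ℕ) : ℝ) = 2*(D:ℝ) + 2*m - 1 := by
      rw [Nat.cast_sub hDm2]; push_cast; ring
    rw [h1, h2] at hreal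
    linarith
  have hkey : α * ((b:ℝ) - a) + 1 < D := by linarith
  by_cases hab : a ≤ b
  · have : (2:ℝ) * ((b:ℝ) - a) ≤ α * ((b:ℝ) - a) := by
      apply mul_le_mul_of_nonneg_right hα
      have : (a:ℝ) ≤ b := by exact_mod_cast hab
      linarith
    have hD' : (2*(b:ℝ) - 2*a + 1) < D := by linarith
    have hDZ : (2*(b:ℤ) - 2*a + 1) < D := by exact_mod_cast hD'
    constructor <;> [skip; skip] <;> omega
  · push_neg at hab
    have : b = 0 ∧ a = 1 := by omega
    constructor <;> omega
end

section
/- For α ≥ 2, a strategy profile whose graph is a star on n vertices minimizes the social cost among all strategy profiles: the optimal social cost equals (n−1)α + 2(n−1)². -/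
open SimpleGraph ENNReal Finset

/-! ### Auxiliary lemmas -/

lemma ncgraph_adj {n : ℕ} (s : Profile n) (i j : Fin n) :
    (NCGraph s).Adj i j ↔ i ≠ j ∧ (j ∈ s i ∨ i ∈ s j) := by
  simp [NCGraph, SimpleGraph.fromRel_adj]

lemma count_pairs {n : ℕ} (t : Profile n) :
    (univ.filter fun p : Fin n × Fin n => p.2 ∈ t p.1).card = ∑ i, (t i).card := by
  rw [Finset.card_filter, Fintype.sum_prod_type]
  exact Finset.sum_congr rfl fun i _ => by
    rw [Finset.sum_boole]; simp

lemma count_pairs' {n : ℕ} (t : Profile n) :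
    (univ.filter fun p : Fin n × Fin n => p.1 ∈ t p.2).card = ∑ i, (t i).card := by
  rw [Finset.card_filter, Fintype.sum_prod_type, Finset.sum_comm]
  exact Finset.sum_congr rfl fun i _ => by
    rw [Finset.sum_boole]; simp

lemma two_mul_card_eq {n : ℕ} (t : Profile n) :
    2 * (NCGraph t).edgeFinset.card
      = (univ.filter fun p : Fin n × Fin n => (NCGraph t).Adj p.1 p.2).card :=
  SimpleGraph.two_mul_card_edgeFinset (NCGraph t)

lemma card_edge_le {n : ℕ} (t : Profile n) :
    (NCGraph t).edgeFinset.card ≤ ∑ i, (t i).card := by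
  have h2 := two_mul_card_eq t
  have hsub : (univ.filter fun p : Fin n × Fin n => (NCGraph t).Adj p.1 p.2) ⊆
      (univ.filter fun p : Fin n × Fin n => p.2 ∈ t p.1) ∪
      (univ.filter fun p : Fin n × Fin n => p.1 ∈ t p.2) := by
    intro p hp
    simp only [Finset.mem_filter, Finset.mem_union, Finset.mem_univ, true_and] at hp ⊢
    rw [ncgraph_adj] at hp
    tauto
  have h3 := (Finset.card_le_card hsub).trans (Finset.card_union_le _ _)
  rw [count_pairs, count_pairs'] at h3
  omega

lemma card_edge_eq {n : ℕ} (s : Profile n) (hv : Valid s) (hr : Rational s) :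
    (NCGraph s).edgeFinset.card = ∑ i, (s i).card := by
  have h2 := two_mul_card_eq s
  have hunion : (univ.filter fun p : Fin n × Fin n => (NCGraph s).Adj p.1 p.2) =
      (univ.filter fun p : Fin n × Fin n => p.2 ∈ s p.1) ∪
      (univ.filter fun p : Fin n × Fin n => p.1 ∈ s p.2) := by
    ext p
    simp only [Finset.mem_filter, Finset.mem_union, Finset.mem_univ, true_and]
    rw [ncgraph_adj]
    constructor
    · tauto
    · rintro (h | h)
      · exact ⟨fun he => hv p.1 (he ▸ h), Or.inl h⟩
      · exact ⟨fun he => hv p.1 (he ▸ h), Or.inr h⟩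
  have hdisj : Disjoint (univ.filter fun p : Fin n × Fin n => p.2 ∈ s p.1)
      (univ.filter fun p : Fin n × Fin n => p.1 ∈ s p.2) := by
    rw [Finset.disjoint_filter]
    intro p _ h1 h2
    exact hr p.1 p.2 h1 h2
  rw [hunion, Finset.card_union_of_disjoint hdisj, count_pairs, count_pairs'] at h2
  omega

lemma le_card_edge {n : ℕ} {G : SimpleGraph (Fin n)} [DecidableRel G.Adj]
    (hn : 0 < n) (hc : ∀ v w : Fin n, G.Reachable v w) : n - 1 ≤ G.edgeFinset.card := by
  set v₀ : Fin n := ⟨0, hn⟩ with hv₀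
  have hex : ∀ v : Fin n, ∃ p : G.Walk v v₀, (p.length : ℕ∞) = G.edist v v₀ :=
    fun v => (hc v v₀).exists_walk_length_eq_edist
  choose P hP using hex
  have key : ∀ v : Fin n, v ≠ v₀ → G.Adj v ((P v).getVert 1) ∧
      G.edist ((P v).getVert 1) v₀ < G.edist v v₀ := by
    intro v hv
    have hnil : ¬ (P v).Nil := SimpleGraph.Walk.not_nil_of_ne hv
    refine ⟨SimpleGraph.Walk.adj_snd hnil, ?_⟩
    have h1 : G.edist ((P v).getVert 1) v₀ ≤ ((P v).tail.length : ℕ∞) :=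
      SimpleGraph.edist_le _
    have h2 : (P v).tail.length + 1 = (P v).length :=
      SimpleGraph.Walk.length_tail_add_one hnil
    calc G.edist ((P v).getVert 1) v₀ ≤ ((P v).tail.length : ℕ∞) := h1
      _ < ((P v).length : ℕ∞) := by
          rw [← h2]; exact_mod_cast Nat.lt_succ_self _
      _ = G.edist v v₀ := hP v
  have hcard : (univ.erase v₀).card = n - 1 := by
    rw [Finset.card_erase_of_mem (Finset.mem_univ _), Finset.card_univ, Fintype.card_fin]
  rw [← hcard]
  apply Finset.card_le_card_of_injOn (fun v => s(v, (P v).getVert 1))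
  · intro v hv
    rw [Finset.mem_coe, SimpleGraph.mem_edgeFinset, SimpleGraph.mem_edgeSet]
    exact (key v (Finset.ne_of_mem_erase hv)).1
  · intro a ha b hb hab
    simp only [Sym2.eq_iff, Prod.mk.injEq, Prod.swap_prod_mk] at hab
    rcases hab with ⟨h1, _⟩ | ⟨h1, h2⟩
    · exact h1
    · exfalso
      have hA := (key a (Finset.ne_of_mem_erase (Finset.mem_coe.mp ha))).2
      have hB := (key b (Finset.ne_of_mem_erase (Finset.mem_coe.mp hb))).2
      rw [h2] at hA
      rw [← h1] at hB
      exact absurd hB (lt_asymm hA)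

lemma card_ne_filter {n : ℕ} :
    (univ.filter fun p : Fin n × Fin n => p.1 ≠ p.2).card = n * n - n := by
  have h := Finset.card_filter_add_card_filter_not (s := (univ : Finset (Fin n × Fin n)))
    (p := fun p => p.1 ≠ p.2)
  have hd : (univ.filter fun p : Fin n × Fin n => ¬ p.1 ≠ p.2).card = n := by
    rw [Finset.card_filter, Fintype.sum_prod_type]
    have h1 : ∀ i : Fin n, (∑ j : Fin n, if ¬ (i, j).1 ≠ (i, j).2 then 1 else 0) = 1 := by
      intro i; simp
    simp only [h1, Finset.sum_const, Finset.card_univ, Fintype.card_fin, smul_eq_mul, mul_one]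
  have hu : (univ : Finset (Fin n × Fin n)).card = n * n := by
    simp [Finset.card_univ]
  omega

lemma card_star_adj {n : ℕ} (hn : 3 ≤ n) (c : Fin n) :
    (univ.filter fun p : Fin n × Fin n => p.1 ≠ p.2 ∧ (p.1 = c ∨ p.2 = c)).card
      = 2 * (n - 1) := by
  rw [Finset.card_filter, Fintype.sum_prod_type]
  have hstep : ∀ i : Fin n,
      (∑ j : Fin n, if (i, j).1 ≠ (i, j).2 ∧ ((i, j).1 = c ∨ (i, j).2 = c) then 1 else 0)
      = if i = c then n - 1 else 1 := by
    intro i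
    by_cases hi : i = c
    · subst hi
      rw [if_pos rfl]
      have h1 : ∀ j : Fin n, (if (i, j).1 ≠ (i, j).2 ∧ ((i, j).1 = i ∨ (i, j).2 = i) then 1 else 0)
          = if ¬ i = j then (1 : ℕ) else 0 := by
        intro j; by_cases h : i = j <;> simp [h]
      rw [Finset.sum_congr rfl (fun j _ => h1 j), Finset.sum_boole]
      have : (univ.filter fun j : Fin n => ¬ i = j) = univ.erase i := by
        ext j; simp [eq_comm]
      rw [this, Finset.card_erase_of_mem (Finset.mem_univ _), Finset.card_univ, Fintype.card_fin]
      rfl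
    · rw [if_neg hi]
      have h1 : ∀ j : Fin n, (if (i, j).1 ≠ (i, j).2 ∧ ((i, j).1 = c ∨ (i, j).2 = c) then 1 else 0)
          = if j = c then (1 : ℕ) else 0 := by
        intro j
        by_cases h : j = c
        · subst h; simp [hi, Ne.symm]
        · simp [h, hi]
      rw [Finset.sum_congr rfl (fun j _ => h1 j), Finset.sum_ite_eq' univ c (fun _ => 1)]
      simp
  rw [Finset.sum_congr rfl (fun i _ => hstep i)]
  have h2 : ∀ i : Fin n, (if i = c then n - 1 else 1) = (if i = c then n - 2 else 0) + 1 := by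
    intro i; split <;> omega
  rw [Finset.sum_congr rfl (fun i _ => h2 i), Finset.sum_add_distrib,
    Finset.sum_ite_eq' univ c (fun _ => n - 2)]
  simp only [Finset.mem_univ, if_pos, Finset.sum_const, Finset.card_univ, Fintype.card_fin,
    smul_eq_mul, mul_one]
  omega

lemma card_far {n : ℕ} (hn : 3 ≤ n) (c : Fin n) :
    (univ.filter fun p : Fin n × Fin n => ¬ (p.1 = p.2 ∨ p.1 = c ∨ p.2 = c)).card
      = (n - 1) * (n - 2) := by
  rw [Finset.card_filter, Fintype.sum_prod_type]
  have hstep : ∀ i : Fin n,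
      (∑ j : Fin n, if ¬ ((i, j).1 = (i, j).2 ∨ (i, j).1 = c ∨ (i, j).2 = c) then 1 else 0)
      = if i = c then 0 else n - 2 := by
    intro i
    by_cases hi : i = c
    · subst hi; simp
    · rw [if_neg hi]
      have h1 : ∀ j : Fin n, (if ¬ ((i, j).1 = (i, j).2 ∨ (i, j).1 = c ∨ (i, j).2 = c) then 1 else 0)
          = if ¬ (i = j ∨ j = c) then (1 : ℕ) else 0 := by
        intro j; simp [hi]
      rw [Finset.sum_congr rfl (fun j _ => h1 j), Finset.sum_boole]
      have hset : (univ.filter fun j : Fin n => (i = j ∨ j = c)) = {i, c} := by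
        ext j; simp [eq_comm]
      have hcard2 : (univ.filter fun j : Fin n => (i = j ∨ j = c)).card = 2 := by
        rw [hset, Finset.card_insert_of_notMem (by simp [hi]), Finset.card_singleton]
      have h := Finset.card_filter_add_card_filter_not
        (s := (univ : Finset (Fin n))) (p := fun j => (i = j ∨ j = c))
      rw [Finset.card_univ, Fintype.card_fin, hcard2] at h
      have : (univ.filter fun j : Fin n => ¬ (i = j ∨ j = c)).card = n - 2 := by omega
      rw [← this]
      norm_cast
  rw [Finset.sum_congr rfl (fun i _ => hstep i)]
  have key : (∑ i : Fin n, if i = c then 0 else n - 2) + (n - 2) = n * (n - 2) := by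
    have : (∑ i : Fin n, if i = c then 0 else n - 2) + (n - 2)
        = ∑ i : Fin n, ((if i = c then 0 else n - 2) + (if i = c then n - 2 else 0)) := by
      rw [Finset.sum_add_distrib, Finset.sum_ite_eq' univ c (fun _ => n - 2)]
      simp
    rw [this]
    have h2 : ∀ i : Fin n, ((if i = c then 0 else n - 2) + (if i = c then n - 2 else 0)) = n - 2 := by
      intro i; split <;> omega
    rw [Finset.sum_congr rfl (fun i _ => h2 i)]
    simp [Finset.card_univ, mul_comm]
  obtain ⟨m, rfl⟩ : ∃ m, n = m + 2 := ⟨n - 2, by omega⟩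
  have e1 : m + 2 - 1 = m + 1 := by omega
  have e2 : m + 2 - 2 = m := by omega
  simp only [e1, e2] at key ⊢
  have hexp : (m + 2) * m = (m + 1) * m + m := by ring
  omega

lemma socialCost_eq {n : ℕ} (α : ℝ) (t : Profile n) :
    socialCost α t = ENNReal.ofReal α * ((∑ i, (t i).card : ℕ) : ℝ≥0∞)
      + ∑ i, ∑ j, ((NCGraph t).edist i j : ℝ≥0∞) := by
  unfold socialCost cost dCost
  rw [Finset.sum_add_distrib, ← Finset.mul_sum, Nat.cast_sum]

lemma adj_boole_sum {n : ℕ} (t : Profile n) :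
    ∑ i : Fin n, ∑ j : Fin n, (if i ≠ j ∧ ¬ (NCGraph t).Adj i j then (1 : ℝ≥0∞) else 0)
      = (((univ.filter fun p : Fin n × Fin n => p.1 ≠ p.2 ∧ ¬ (NCGraph t).Adj p.1 p.2).card : ℕ) : ℝ≥0∞) := by
  rw [← Fintype.sum_prod_type'
    (f := fun i j => if i ≠ j ∧ ¬ (NCGraph t).Adj i j then (1 : ℝ≥0∞) else 0)]
  rw [Finset.sum_boole]

lemma ne_boole_sum {n : ℕ} :
    ∑ i : Fin n, ∑ j : Fin n, (if i ≠ j then (1 : ℝ≥0∞) else 0)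
      = ((n * n - n : ℕ) : ℝ≥0∞) := by
  rw [← Fintype.sum_prod_type' (f := fun i j : Fin n => if i ≠ j then (1 : ℝ≥0∞) else 0)]
  rw [Finset.sum_boole]
  norm_cast
  exact card_ne_filter

lemma far_boole_sum {n : ℕ} (hn : 3 ≤ n) (c : Fin n) :
    ∑ i : Fin n, ∑ j : Fin n, (if ¬ (i = j ∨ i = c ∨ j = c) then (1 : ℝ≥0∞) else 0)
      = (((n - 1) * (n - 2) : ℕ) : ℝ≥0∞) := by
  rw [← Fintype.sum_prod_type'
    (f := fun i j : Fin n => if ¬ (i = j ∨ i = c ∨ j = c) then (1 : ℝ≥0∞) else 0)]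
  rw [Finset.sum_boole]
  norm_cast
  exact card_far hn c

lemma adj_filter_card {n : ℕ} (t : Profile n) :
    (univ.filter fun p : Fin n × Fin n => p.1 ≠ p.2 ∧ ¬ (NCGraph t).Adj p.1 p.2).card
      = (n * n - n) - 2 * (NCGraph t).edgeFinset.card := by
  have h := Finset.card_filter_add_card_filter_not
    (s := univ.filter fun p : Fin n × Fin n => p.1 ≠ p.2)
    (p := fun p => (NCGraph t).Adj p.1 p.2)
  rw [Finset.filter_filter, Finset.filter_filter, card_ne_filter] at h
  have hadj : (univ.filter fun p : Fin n × Fin n => p.1 ≠ p.2 ∧ (NCGraph t).Adj p.1 p.2)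
      = univ.filter fun p : Fin n × Fin n => (NCGraph t).Adj p.1 p.2 := by
    ext p
    simp only [Finset.mem_filter, Finset.mem_univ, true_and, and_iff_right_iff_imp]
    exact fun h => h.ne
  rw [hadj, ← two_mul_card_eq] at h
  omega

/-- For `α ≥ 2`, a rational star profile minimizes the social cost, which
equals `(n−1)α + 2(n−1)²`. -/
theorem stmt12 {n : ℕ} (hn : 3 ≤ n) (α : ℝ) (hα : 2 ≤ α)
    (s : Profile n) (hv : Valid s) (hr : Rational s) (hstar : IsStar (NCGraph s)) :
    socialCost α s = ENNReal.ofReal α * ((n - 1 : ℕ) : ℝ≥0∞) + 2 * ((n - 1 : ℕ) : ℝ≥0∞) ^ 2 ∧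
    ∀ t : Profile n, Valid t → socialCost α s ≤ socialCost α t := by
  obtain ⟨c, hc⟩ := hstar
  -- general lower bound
  have lower : ∀ t : Profile n, Valid t →
      ENNReal.ofReal α * ((n - 1 : ℕ) : ℝ≥0∞) + 2 * ((n - 1 : ℕ) : ℝ≥0∞) ^ 2
        ≤ socialCost α t := by
    intro t htv
    by_cases hconn : ∀ v w : Fin n, (NCGraph t).Reachable v w
    · -- connected case
      set m := (NCGraph t).edgeFinset.card with hm
      set B := ∑ i, (t i).card with hB
      have hm1 : n - 1 ≤ m := le_card_edge (by omega) hconn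
      have hmB : m ≤ B := card_edge_le t
      have h2m : 2 * m ≤ n * n - n := by
        rw [hm, two_mul_card_eq t, ← card_ne_filter (n := n)]
        refine Finset.card_le_card fun p hp => ?_
        simp only [Finset.mem_filter, Finset.mem_univ, true_and] at hp ⊢
        exact hp.ne
      -- distance lower bound
      have hpt : ∀ i j : Fin n,
          (if i ≠ j then (1 : ℝ≥0∞) else 0) + (if i ≠ j ∧ ¬ (NCGraph t).Adj i j then 1 else 0)
            ≤ ((NCGraph t).edist i j : ℝ≥0∞) := by
        intro i j
        by_cases hij : i = j
        · simp [hij]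
        · have h1 : 1 ≤ (NCGraph t).edist i j :=
            ENat.one_le_iff_ne_zero.mpr (pos_iff_ne_zero.mp (edist_pos_of_ne hij))
          by_cases hadj : (NCGraph t).Adj i j
          · simp only [if_pos hij, if_neg (fun h : i ≠ j ∧ ¬ _ => h.2 hadj), add_zero]
            have := ENat.toENNReal_le.mpr h1
            simpa using this
          · have h2 : (2 : ℕ∞) ≤ (NCGraph t).edist i j := by
              have hne1 : (NCGraph t).edist i j ≠ 1 :=
                fun h => hadj (edist_eq_one_iff_adj.mp h)
              have hlt : (1 : ℕ∞) < (NCGraph t).edist i j := lt_of_le_of_ne h1 (Ne.symm hne1)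
              have h21 := (ENat.add_one_le_iff (n := (NCGraph t).edist i j) (m := 1) (by simp)).mpr hlt
              rwa [one_add_one_eq_two] at h21
            rw [if_pos hij, if_pos ⟨hij, hadj⟩, one_add_one_eq_two]
            have := ENat.toENNReal_le.mpr h2
            simpa using this
      have hDsum : ((n * n - n : ℕ) : ℝ≥0∞) + (((n * n - n) - 2 * m : ℕ) : ℝ≥0∞)
          ≤ ∑ i, ∑ j, ((NCGraph t).edist i j : ℝ≥0∞) := by
        calc ((n * n - n : ℕ) : ℝ≥0∞) + (((n * n - n) - 2 * m : ℕ) : ℝ≥0∞)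
            = (∑ i : Fin n, ∑ j : Fin n, (if i ≠ j then (1 : ℝ≥0∞) else 0))
              + ∑ i : Fin n, ∑ j : Fin n, (if i ≠ j ∧ ¬ (NCGraph t).Adj i j then (1 : ℝ≥0∞) else 0) := by
              rw [ne_boole_sum, adj_boole_sum, adj_filter_card]
          _ = ∑ i : Fin n, ∑ j : Fin n,
              ((if i ≠ j then (1 : ℝ≥0∞) else 0) + (if i ≠ j ∧ ¬ (NCGraph t).Adj i j then 1 else 0)) := by
              rw [← Finset.sum_add_distrib]
              exact Finset.sum_congr rfl fun i _ => Finset.sum_add_distrib.symm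
          _ ≤ _ :=
              Finset.sum_le_sum fun i _ => Finset.sum_le_sum fun j _ => hpt i j
      -- arithmetic
      have h2α : (2 : ℝ≥0∞) ≤ ENNReal.ofReal α := by
        rw [← ENNReal.ofReal_ofNat]
        exact ENNReal.ofReal_le_ofReal hα
      have harith : 2 * ((n - 1) * (n - 1))
          ≤ 2 * (B - (n - 1)) + ((n * n - n) + ((n * n - n) - 2 * m)) := by
        obtain ⟨k, rfl⟩ : ∃ k, n = k + 1 := ⟨n - 1, by omega⟩
        have hexp : (k + 1) * (k + 1) = k * k + k + (k + 1) := by ring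
        simp only [Nat.add_sub_cancel] at *
        omega
      rw [socialCost_eq]
      calc ENNReal.ofReal α * ((n - 1 : ℕ) : ℝ≥0∞) + 2 * ((n - 1 : ℕ) : ℝ≥0∞) ^ 2
          = ENNReal.ofReal α * ((n - 1 : ℕ) : ℝ≥0∞) + ((2 * ((n - 1) * (n - 1)) : ℕ) : ℝ≥0∞) := by
            push_cast; ring
        _ ≤ ENNReal.ofReal α * ((n - 1 : ℕ) : ℝ≥0∞)
            + ((2 * (B - (n - 1)) + ((n * n - n) + ((n * n - n) - 2 * m)) : ℕ) : ℝ≥0∞) := by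
            exact add_le_add (le_refl _) (Nat.cast_le.mpr harith)
        _ = ENNReal.ofReal α * ((n - 1 : ℕ) : ℝ≥0∞) + (2 : ℝ≥0∞) * ((B - (n - 1) : ℕ) : ℝ≥0∞)
            + (((n * n - n : ℕ) : ℝ≥0∞) + (((n * n - n) - 2 * m : ℕ) : ℝ≥0∞)) := by
            push_cast; ring
        _ ≤ ENNReal.ofReal α * ((n - 1 : ℕ) : ℝ≥0∞)
            + ENNReal.ofReal α * ((B - (n - 1) : ℕ) : ℝ≥0∞)
            + (((n * n - n : ℕ) : ℝ≥0∞) + (((n * n - n) - 2 * m : ℕ) : ℝ≥0∞)) := by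
            gcongr
        _ = ENNReal.ofReal α * ((B : ℕ) : ℝ≥0∞)
            + (((n * n - n : ℕ) : ℝ≥0∞) + (((n * n - n) - 2 * m : ℕ) : ℝ≥0∞)) := by
            rw [← mul_add]
            congr 2
            rw [← Nat.cast_add]
            congr 1
            omega
        _ ≤ ENNReal.ofReal α * ((B : ℕ) : ℝ≥0∞)
            + ∑ i, ∑ j, ((NCGraph t).edist i j : ℝ≥0∞) := by
            exact add_le_add (le_refl _) hDsum
    · -- disconnected case
      push_neg at hconn
      obtain ⟨v, w, hvw⟩ := hconn
      have htop : (NCGraph t).edist v w = ⊤ := edist_eq_top_of_not_reachable hvw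
      have hsum : ∑ i, ∑ j, ((NCGraph t).edist i j : ℝ≥0∞) = ⊤ := by
        rw [ENNReal.sum_eq_top]
        refine ⟨v, Finset.mem_univ v, ?_⟩
        rw [ENNReal.sum_eq_top]
        exact ⟨w, Finset.mem_univ w, by simp [htop]⟩
      rw [socialCost_eq, hsum, add_top]
      exact le_top
  -- upper bound for the star
  have hB : ∑ i, (s i).card = n - 1 := by
    have hm := card_edge_eq s hv hr
    have h2 := two_mul_card_eq s
    have hfe : (univ.filter fun p : Fin n × Fin n => (NCGraph s).Adj p.1 p.2)
        = univ.filter fun p : Fin n × Fin n => p.1 ≠ p.2 ∧ (p.1 = c ∨ p.2 = c) := by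
      ext p
      simp only [Finset.mem_filter, Finset.mem_univ, true_and]
      rw [hc]
    rw [hfe, card_star_adj hn c] at h2
    omega
  have hpt : ∀ i j : Fin n, ((NCGraph s).edist i j : ℝ≥0∞)
      ≤ (if i ≠ j then (1 : ℝ≥0∞) else 0) + (if ¬ (i = j ∨ i = c ∨ j = c) then 1 else 0) := by
    intro i j
    by_cases hij : i = j
    · simp [hij]
    · by_cases hcc : i = c ∨ j = c
      · have hadj : (NCGraph s).Adj i j := (hc i j).mpr ⟨hij, hcc⟩
        have : (NCGraph s).edist i j = 1 := edist_eq_one_iff_adj.mpr hadj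
        rw [this, if_pos hij, if_neg (by tauto)]
        simp
      · push_neg at hcc
        have hic : (NCGraph s).Adj i c := (hc i c).mpr ⟨hcc.1, Or.inr rfl⟩
        have hcj : (NCGraph s).Adj c j := (hc c j).mpr ⟨fun h => hcc.2 h.symm, Or.inl rfl⟩
        have htri : (NCGraph s).edist i j ≤ (NCGraph s).edist i c + (NCGraph s).edist c j :=
          SimpleGraph.edist_triangle
        rw [edist_eq_one_iff_adj.mpr hic, edist_eq_one_iff_adj.mpr hcj] at htri
        rw [if_pos hij, if_pos (by tauto)]
        have : ((NCGraph s).edist i j : ℝ≥0∞) ≤ ((1 + 1 : ℕ∞) : ℝ≥0∞) :=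
          ENat.toENNReal_le.mpr htri
        simpa using this
  have hDup : ∑ i, ∑ j, ((NCGraph s).edist i j : ℝ≥0∞) ≤ 2 * ((n - 1 : ℕ) : ℝ≥0∞) ^ 2 := by
    calc ∑ i, ∑ j, ((NCGraph s).edist i j : ℝ≥0∞)
        ≤ ∑ i : Fin n, ∑ j : Fin n,
          ((if i ≠ j then (1 : ℝ≥0∞) else 0) + (if ¬ (i = j ∨ i = c ∨ j = c) then 1 else 0)) := by
          refine Finset.sum_le_sum fun i _ => Finset.sum_le_sum fun j _ => hpt i j
      _ = ((n * n - n : ℕ) : ℝ≥0∞) + (((n - 1) * (n - 2) : ℕ) : ℝ≥0∞) := by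
          rw [← ne_boole_sum (n := n), ← far_boole_sum hn c, ← Finset.sum_add_distrib]
          congr 1
          ext i
          rw [← Finset.sum_add_distrib]
      _ = 2 * ((n - 1 : ℕ) : ℝ≥0∞) ^ 2 := by
          have hnat : (n * n - n) + (n - 1) * (n - 2) = 2 * (n - 1) ^ 2 := by
            obtain ⟨k, rfl⟩ : ∃ k, n = k + 3 := ⟨n - 3, by omega⟩
            have e1 : k + 3 - 1 = k + 2 := by omega
            have e2 : k + 3 - 2 = k + 1 := by omega
            rw [e1, e2]
            have h1 : (k + 3) * (k + 3) = k * k + 6 * k + 9 := by ring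
            have h2 : (k + 2) * (k + 1) = k * k + 3 * k + 2 := by ring
            have h3 : (k + 2) ^ 2 = k * k + 4 * k + 4 := by ring
            omega
          rw [← Nat.cast_add, hnat]
          push_cast
          ring
  have upper : socialCost α s
      ≤ ENNReal.ofReal α * ((n - 1 : ℕ) : ℝ≥0∞) + 2 * ((n - 1 : ℕ) : ℝ≥0∞) ^ 2 := by
    rw [socialCost_eq, hB]
    exact add_le_add (le_refl _) hDup
  have heq := le_antisymm upper (lower s hv)
  exact ⟨heq, fun t htv => heq ▸ lower t htv⟩
end

section
/- For α > 1 and n = 3, network creation games have the coalitional finite improvement property: the function Φ(s) = Σ_i (c_i^d(s) + 2·c_i^b(s)) strictly decreases along every profitable coalitional deviation between profiles with connected graphs, hence every coalitional improvement path is finite. -/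
open SimpleGraph ENNReal Finset

/-- A coalitional improvement step: the set of players changing their strategy all
strictly decrease their cost. -/
def CoalStep {n : ℕ} (α : ℝ) (s s' : Profile n) : Prop :=
  Valid s' ∧ s' ≠ s ∧ ∀ i, s' i ≠ s i → cost α s' i < cost α s i

/-- The generalized ordinal potential `Φ(s) = Σ_i (c_i^d(s) + 2 c_i^b(s))`. -/
noncomputable def Phi {n : ℕ} (α : ℝ) (s : Profile n) : ℝ≥0∞ :=
  ∑ i, (dCost s i + 2 * (ENNReal.ofReal α * (s i).card))

lemma edist_formula (G : SimpleGraph (Fin 3)) [DecidableRel G.Adj] (i j : Fin 3) :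
    G.edist i j = if i = j then 0 else if G.Adj i j then 1
      else if ∃ k, G.Adj i k ∧ G.Adj k j then 2 else ⊤ := by
  by_cases h1 : i = j
  · simp [h1]
  rw [if_neg h1]
  by_cases h2 : G.Adj i j
  · rw [if_pos h2, edist_eq_one_iff_adj]; exact h2
  rw [if_neg h2]
  by_cases h3 : ∃ k, G.Adj i k ∧ G.Adj k j
  · rw [if_pos h3]
    obtain ⟨k, hik, hkj⟩ := h3
    have hle : G.edist i j ≤ 2 := by
      have := edist_le (Walk.cons hik (Walk.cons hkj Walk.nil))
      simpa using this
    have hne0 : G.edist i j ≠ 0 := by simp [h1]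
    have hne1 : G.edist i j ≠ 1 := by
      rw [ne_eq, edist_eq_one_iff_adj]; exact h2
    have hnetop : G.edist i j ≠ ⊤ := ne_top_of_le_ne_top (by simp) hle
    lift G.edist i j to ℕ using hnetop with n hn
    have : n ≤ 2 := by exact_mod_cast hle
    have h0 : n ≠ 0 := by exact_mod_cast hne0
    have h1' : n ≠ 1 := by exact_mod_cast hne1
    have : n = 2 := by omega
    exact_mod_cast this
  · rw [if_neg h3]
    apply edist_eq_top_of_not_reachable
    intro hr
    obtain ⟨w⟩ := hr
    obtain ⟨p, hp⟩ := w.toPath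
    have hl : p.length < 3 := by simpa using hp.length_lt
    cases p with
    | nil => exact h1 rfl
    | cons h w' =>
      cases w' with
      | nil => exact h2 h
      | cons h' w'' =>
        cases w'' with
        | nil => exact h3 ⟨_, h, h'⟩
        | cons h'' w''' => simp [Walk.length_cons] at hl; omega

def getm (a b c i : ℕ) : ℕ := if i = 0 then a else if i = 1 then b else c
def adjm (a b c i j : ℕ) : Bool := !(i == j) && ((getm a b c i).testBit j || (getm a b c j).testBit i)
def dm (a b c i j : ℕ) : ℕ :=
  if i == j then 0 else if adjm a b c i j then 1
  else if adjm a b c i 0 && adjm a b c 0 j || adjm a b c i 1 && adjm a b c 1 j || adjm a b c i 2 && adjm a b c 2 j then 2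
  else 3
def rowm (a b c i : ℕ) : ℕ := dm a b c i 0 + dm a b c i 1 + dm a b c i 2
def connm (a b c : ℕ) : Bool := dm a b c 0 1 < 3 && dm a b c 0 2 < 3 && dm a b c 1 2 < 3
def cardm (m : ℕ) : ℕ := (if m.testBit 0 then 1 else 0) + (if m.testBit 1 then 1 else 0) + (if m.testBit 2 then 1 else 0)

def pairData (a b c d e f : ℕ) : ℤ × ℤ × ℤ × ℤ × ℤ × ℤ × ℤ × ℤ :=
  (2*((cardm d : ℤ) + cardm e + cardm f - cardm a - cardm b - cardm c),
   (rowm d e f 0 : ℤ) + rowm d e f 1 + rowm d e f 2 - rowm a b c 0 - rowm a b c 1 - rowm a b c 2,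
   if a == d then 0 else (cardm d : ℤ) - cardm a,
   if a == d then -1 else (rowm d e f 0 : ℤ) - rowm a b c 0,
   if b == e then 0 else (cardm e : ℤ) - cardm b,
   if b == e then -1 else (rowm d e f 1 : ℤ) - rowm a b c 1,
   if c == f then 0 else (cardm f : ℤ) - cardm c,
   if c == f then -1 else (rowm d e f 2 : ℤ) - rowm a b c 2)

def ncgPool : List (ℕ × ℕ × ℕ × ℕ) :=
  [(2,0,0,2), (2,0,2,0), (2,2,0,0), (0,0,0,2), (0,2,2,2), (0,0,2,0), (0,2,0,0), (2,0,0,1), (2,0,1,0), (2,1,0,0)]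

def certok (A B a0 b0 a1 b1 a2 b2 : ℤ) (l : ℕ × ℕ × ℕ × ℕ) : Bool :=
  ((-(l.1 : ℤ) + l.2.1*a0 + l.2.2.1*a1 + l.2.2.2*a2) == A &&
    (B < ((l.1 : ℤ) + l.2.1*b0 + l.2.2.1*b1 + l.2.2.2*b2) ||
     (B ≤ ((l.1 : ℤ) + l.2.1*b0 + l.2.2.1*b1 + l.2.2.2*b2) && 0 < l.1+l.2.1+l.2.2.1+l.2.2.2))) ||
  ((-(l.1 : ℤ) + l.2.1*a0 + l.2.2.1*a1 + l.2.2.2*a2) == 0 &&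
    0 ≤ ((l.1 : ℤ) + l.2.1*b0 + l.2.2.1*b1 + l.2.2.2*b2) && 0 < l.1+l.2.1+l.2.2.1+l.2.2.2)

def ncgCheck (a b c d e f : ℕ) : Bool :=
  !(connm a b c && connm d e f && !(a == d && b == e && c == f)) ||
  (match pairData a b c d e f with
   | (A, B, a0, b0, a1, b1, a2, b2) => ncgPool.any (certok A B a0 b0 a1 b1 a2 b2))

def vm0 (x : ℕ) : ℕ := 2*x
def vm1 (x : ℕ) : ℕ := (x % 2) + 4*(x / 2)
def vm2 (x : ℕ) : ℕ := x

set_option maxHeartbeats 4000000 in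
set_option maxRecDepth 4000 in
theorem ncgCore : ∀ a b c d e f : Fin 4, ncgCheck (vm0 a) (vm1 b) (vm2 c) (vm0 d) (vm1 e) (vm2 f) = true := by decide

-- === encoding ncgBridge ===

def encS (S : Finset (Fin 3)) : ℕ := ∑ j ∈ S, 2 ^ j.val

lemma tb0 : ∀ S : Finset (Fin 3), (encS S).testBit 0 = decide ((0 : Fin 3) ∈ S) := by decide
lemma tb1 : ∀ S : Finset (Fin 3), (encS S).testBit 1 = decide ((1 : Fin 3) ∈ S) := by decide
lemma tb2 : ∀ S : Finset (Fin 3), (encS S).testBit 2 = decide ((2 : Fin 3) ∈ S) := by decide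
lemma tbm0 : ∀ S : Finset (Fin 3), encS S % 2 = 1 ↔ (0 : Fin 3) ∈ S := by decide
lemma card_encS : ∀ S : Finset (Fin 3), cardm (encS S) = S.card := by decide
lemma encS_inj : ∀ S T : Finset (Fin 3), encS S = encS T → S = T := by decide
lemma exists_vm0 : ∀ S : Finset (Fin 3), (0 : Fin 3) ∉ S → ∃ x : Fin 4, vm0 x.val = encS S := by decide
lemma exists_vm1 : ∀ S : Finset (Fin 3), (1 : Fin 3) ∉ S → ∃ x : Fin 4, vm1 x.val = encS S := by decide
lemma exists_vm2 : ∀ S : Finset (Fin 3), (2 : Fin 3) ∉ S → ∃ x : Fin 4, vm2 x.val = encS S := by decide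

lemma adjm_eq (s : Profile 3) (i j : Fin 3) :
    adjm (encS (s 0)) (encS (s 1)) (encS (s 2)) i.val j.val = true ↔ (NCGraph s).Adj i j := by
  have hA : ∀ i j : Fin 3, (NCGraph s).Adj i j ↔ i ≠ j ∧ (j ∈ s i ∨ i ∈ s j) := fun i j =>
    (SimpleGraph.fromRel_adj (fun a b => b ∈ s a) i j).symm
  fin_cases i <;> fin_cases j <;>
    simp [adjm, getm, tb0, tb1, tb2, tbm0, hA, Fin.ext_iff]

lemma exists_fin3 {P : Fin 3 → Prop} : (∃ k, P k) ↔ P 0 ∨ P 1 ∨ P 2 := by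
  constructor
  · rintro ⟨k, h⟩; fin_cases k <;> tauto
  · rintro (h | h | h) <;> exact ⟨_, h⟩

lemma dm_le_three (a b c i j : ℕ) : dm a b c i j ≤ 3 := by
  unfold dm; split_ifs <;> omega

set_option maxHeartbeats 1600000 in
lemma dm_eq_edist (s : Profile 3) (i j : Fin 3) :
    (NCGraph s).edist i j =
      if dm (encS (s 0)) (encS (s 1)) (encS (s 2)) i.val j.val = 3 then ⊤
      else (dm (encS (s 0)) (encS (s 1)) (encS (s 2)) i.val j.val : ℕ∞) := by
  set a := encS (s 0) with ha; set b := encS (s 1) with hb; set c := encS (s 2) with hc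
  rw [edist_formula]
  by_cases h1 : i = j
  · have hvv : i.val = j.val := by rw [h1]
    have hdm : dm a b c i.val j.val = 0 := by simp [dm, hvv]
    rw [if_pos h1, hdm]; norm_num
  · have hv : i.val ≠ j.val := fun h => h1 (Fin.ext h)
    have hbeq : (i.val == j.val) = false := by simp [hv]
    by_cases h2 : (NCGraph s).Adj i j
    · have hadj : adjm a b c i.val j.val = true := (adjm_eq s i j).mpr h2
      have hdm : dm a b c i.val j.val = 1 := by simp [dm, hbeq, hadj]
      rw [if_neg h1, if_pos h2, hdm]; norm_num
    · have hadj : adjm a b c i.val j.val = false := by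
        rw [Bool.eq_false_iff]; intro h; exact h2 ((adjm_eq s i j).mp h)
      have hex : (∃ k, (NCGraph s).Adj i k ∧ (NCGraph s).Adj k j) ↔
          (adjm a b c i.val 0 && adjm a b c 0 j.val || adjm a b c i.val 1 && adjm a b c 1 j.val
            || adjm a b c i.val 2 && adjm a b c 2 j.val) = true := by
        rw [exists_fin3]
        have e0 := adjm_eq s i 0; have e0' := adjm_eq s 0 j
        have e1 := adjm_eq s i 1; have e1' := adjm_eq s 1 j
        have e2 := adjm_eq s i 2; have e2' := adjm_eq s 2 j
        simp only [Fin.val_zero, Fin.val_one, Fin.val_two, ← ha, ← hb, ← hc] at e0 e0' e1 e1' e2 e2'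
        simp only [Bool.or_eq_true, Bool.and_eq_true, e0, e0', e1, e1', e2, e2']
        tauto
      by_cases h3 : ∃ k, (NCGraph s).Adj i k ∧ (NCGraph s).Adj k j
      · have hor := hex.mp h3
        have hdm : dm a b c i.val j.val = 2 := by simp [dm, hbeq, hadj, hor]
        rw [if_neg h1, if_neg h2, if_pos h3, hdm]; norm_num
      · have hor : (adjm a b c i.val 0 && adjm a b c 0 j.val || adjm a b c i.val 1 && adjm a b c 1 j.val
            || adjm a b c i.val 2 && adjm a b c 2 j.val) = false := by
          rw [Bool.eq_false_iff]; intro h; exact h3 (hex.mpr h)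
        have hdm : dm a b c i.val j.val = 3 := by simp [dm, hbeq, hadj, hor]
        rw [if_neg h1, if_neg h2, if_neg h3, hdm]; simp

lemma dm_lt (s : Profile 3) (h : (NCGraph s).Connected) (i j : Fin 3) :
    dm (encS (s 0)) (encS (s 1)) (encS (s 2)) i.val j.val < 3 := by
  have h3 := dm_le_three (encS (s 0)) (encS (s 1)) (encS (s 2)) i.val j.val
  rcases lt_or_eq_of_le h3 with h' | h'
  · exact h'
  · exfalso
    have := dm_eq_edist s i j
    rw [if_pos h'] at this
    exact (edist_ne_top_iff_reachable.mpr (h.preconnected i j)) this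

lemma edist_eq_dm (s : Profile 3) (h : (NCGraph s).Connected) (i j : Fin 3) :
    (NCGraph s).edist i j = (dm (encS (s 0)) (encS (s 1)) (encS (s 2)) i.val j.val : ℕ∞) := by
  rw [dm_eq_edist s i j, if_neg (by have := dm_lt s h i j; omega)]

lemma conn_to_connm (s : Profile 3) (h : (NCGraph s).Connected) :
    connm (encS (s 0)) (encS (s 1)) (encS (s 2)) = true := by
  have h1 := dm_lt s h 0 1
  have h2 := dm_lt s h 0 2
  have h3 := dm_lt s h 1 2
  simp only [Fin.val_zero, Fin.val_one, Fin.val_two] at h1 h2 h3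
  simp [connm, h1, h2, h3]

lemma dCost_eq (s : Profile 3) (h : (NCGraph s).Connected) (i : Fin 3) :
    dCost s i = ((rowm (encS (s 0)) (encS (s 1)) (encS (s 2)) i.val : ℕ) : ℝ≥0∞) := by
  rw [dCost, Fin.sum_univ_three]
  rw [edist_eq_dm s h i 0, edist_eq_dm s h i 1, edist_eq_dm s h i 2]
  simp only [Fin.val_zero, Fin.val_one, Fin.val_two, ENat.toENNReal_coe]
  rw [rowm]
  push_cast
  ring

lemma cost_eq (α : ℝ) (s : Profile 3) (h : (NCGraph s).Connected) (i : Fin 3) :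
    cost α s i = ENNReal.ofReal α * ((cardm (encS (s i)) : ℕ) : ℝ≥0∞)
      + ((rowm (encS (s 0)) (encS (s 1)) (encS (s 2)) i.val : ℕ) : ℝ≥0∞) := by
  rw [cost, dCost_eq s h i, card_encS]

lemma Phi_eq (α : ℝ) (s : Profile 3) (h : (NCGraph s).Connected) :
    Phi α s = ENNReal.ofReal α *
        ((2 * (cardm (encS (s 0)) + cardm (encS (s 1)) + cardm (encS (s 2))) : ℕ) : ℝ≥0∞)
      + ((rowm (encS (s 0)) (encS (s 1)) (encS (s 2)) 0 + rowm (encS (s 0)) (encS (s 1)) (encS (s 2)) 1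
          + rowm (encS (s 0)) (encS (s 1)) (encS (s 2)) 2 : ℕ) : ℝ≥0∞) := by
  rw [Phi, Fin.sum_univ_three, dCost_eq s h 0, dCost_eq s h 1, dCost_eq s h 2,
    ← card_encS (s 0), ← card_encS (s 1), ← card_encS (s 2)]
  simp only [Fin.val_zero, Fin.val_one, Fin.val_two]
  push_cast
  ring

lemma ofReal_cast_lt (α : ℝ) (hα : 0 < α) (c' r' c r : ℕ) :
    (ENNReal.ofReal α * (c' : ℝ≥0∞) + (r' : ℝ≥0∞) < ENNReal.ofReal α * c + r)
      ↔ α * c' + r' < α * c + r := by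
  have e : ∀ (c r : ℕ), (ENNReal.ofReal α * c + r : ℝ≥0∞) = ENNReal.ofReal (α * c + r) := by
    intro c r
    rw [ENNReal.ofReal_add (by positivity) (Nat.cast_nonneg r), ENNReal.ofReal_mul hα.le,
      ENNReal.ofReal_natCast, ENNReal.ofReal_natCast]
  rw [e, e, ENNReal.ofReal_lt_ofReal_iff_of_nonneg (by positivity)]

lemma ncgFarkas (α : ℝ) (hα : 1 < α) (A B a0 b0 a1 b1 a2 b2 : ℤ) (l : ℕ × ℕ × ℕ × ℕ)
    (h0 : (a0 : ℝ) * α + b0 < 0) (h1 : (a1 : ℝ) * α + b1 < 0) (h2 : (a2 : ℝ) * α + b2 < 0)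
    (hc : certok A B a0 b0 a1 b1 a2 b2 l = true) : (A : ℝ) * α + B < 0 := by
  obtain ⟨l0, l1, l2, l3⟩ := l
  simp only [certok, Bool.or_eq_true, Bool.and_eq_true, beq_iff_eq, decide_eq_true_eq] at hc
  have t0 : (l0 : ℝ) * (1 - α) ≤ 0 :=
    mul_nonpos_of_nonneg_of_nonpos (Nat.cast_nonneg _) (by linarith)
  have t1 : (l1 : ℝ) * ((a0 : ℝ) * α + b0) ≤ 0 :=
    mul_nonpos_of_nonneg_of_nonpos (Nat.cast_nonneg _) h0.le
  have t2 : (l2 : ℝ) * ((a1 : ℝ) * α + b1) ≤ 0 :=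
    mul_nonpos_of_nonneg_of_nonpos (Nat.cast_nonneg _) h1.le
  have t3 : (l3 : ℝ) * ((a2 : ℝ) * α + b2) ≤ 0 :=
    mul_nonpos_of_nonneg_of_nonpos (Nat.cast_nonneg _) h2.le
  have key : ((-(l0:ℤ) + l1*a0 + l2*a1 + l3*a2 : ℤ) : ℝ) * α + ((l0:ℤ) + l1*b0 + l2*b1 + l3*b2 : ℤ) =
      (l0 : ℝ) * (1 - α) + (l1 : ℝ) * ((a0 : ℝ) * α + b0) + (l2 : ℝ) * ((a1 : ℝ) * α + b1)
        + (l3 : ℝ) * ((a2 : ℝ) * α + b2) := by push_cast; ring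
  have keyle : ((-(l0:ℤ) + l1*a0 + l2*a1 + l3*a2 : ℤ) : ℝ) * α + ((l0:ℤ) + l1*b0 + l2*b1 + l3*b2 : ℤ) ≤ 0 := by
    rw [key]; linarith
  have keystrict : 0 < l0 + l1 + l2 + l3 →
      ((-(l0:ℤ) + l1*a0 + l2*a1 + l3*a2 : ℤ) : ℝ) * α + ((l0:ℤ) + l1*b0 + l2*b1 + l3*b2 : ℤ) < 0 := by
    intro hpos
    have hcase : 0 < l0 ∨ 0 < l1 ∨ 0 < l2 ∨ 0 < l3 := by omega
    rw [key]
    rcases hcase with h | h | h | h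
    · have : (l0 : ℝ) * (1 - α) < 0 :=
        mul_neg_of_pos_of_neg (by exact_mod_cast h) (by linarith)
      linarith
    · have : (l1 : ℝ) * ((a0 : ℝ) * α + b0) < 0 :=
        mul_neg_of_pos_of_neg (by exact_mod_cast h) h0
      linarith
    · have : (l2 : ℝ) * ((a1 : ℝ) * α + b1) < 0 :=
        mul_neg_of_pos_of_neg (by exact_mod_cast h) h1
      linarith
    · have : (l3 : ℝ) * ((a2 : ℝ) * α + b2) < 0 :=
        mul_neg_of_pos_of_neg (by exact_mod_cast h) h2
      linarith
  rcases hc with ⟨hSa, hrest⟩ | ⟨⟨hSa, hSb⟩, hpos⟩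
  · have hAr : ((A : ℤ) : ℝ) * α = ((-(l0:ℤ) + l1*a0 + l2*a1 + l3*a2 : ℤ) : ℝ) * α := by
      rw [hSa]
    rcases hrest with hlt | ⟨hle, hpos⟩
    · have hB : (B : ℝ) < ((l0:ℤ) + l1*b0 + l2*b1 + l3*b2 : ℤ) := by exact_mod_cast hlt
      linarith
    · have hB : (B : ℝ) ≤ ((l0:ℤ) + l1*b0 + l2*b1 + l3*b2 : ℤ) := by exact_mod_cast hle
      have := keystrict hpos
      linarith
  · exfalso
    have hSa' : ((-(l0:ℤ) + l1*a0 + l2*a1 + l3*a2 : ℤ) : ℝ) = 0 := by exact_mod_cast hSa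
    have hSb' : (0 : ℝ) ≤ ((l0:ℤ) + l1*b0 + l2*b1 + l3*b2 : ℤ) := by exact_mod_cast hSb
    have := keystrict hpos
    rw [hSa'] at this
    linarith

lemma maskbeq_true {S T : Finset (Fin 3)} (h : S = T) : (encS S == encS T) = true := by
  rw [h]; simp

lemma maskbeq_false {S T : Finset (Fin 3)} (h : S ≠ T) : (encS S == encS T) = false := by
  rw [Bool.eq_false_iff]; intro hb; exact h (encS_inj _ _ (by simpa using hb))

lemma ncgBridge (α : ℝ) (hα : 1 < α) (s s' : Profile 3) (hv : Valid s) (hv' : Valid s')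
    (hc : (NCGraph s).Connected) (hc' : (NCGraph s').Connected) (hne : s' ≠ s)
    (hdev : ∀ i, s' i ≠ s i → cost α s' i < cost α s i) : Phi α s' < Phi α s := by
  have hα0 : (0 : ℝ) < α := by linarith
  obtain ⟨x0, hx0⟩ := exists_vm0 (s 0) (hv 0)
  obtain ⟨x1, hx1⟩ := exists_vm1 (s 1) (hv 1)
  obtain ⟨x2, hx2⟩ := exists_vm2 (s 2) (hv 2)
  obtain ⟨y0, hy0⟩ := exists_vm0 (s' 0) (hv' 0)
  obtain ⟨y1, hy1⟩ := exists_vm1 (s' 1) (hv' 1)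
  obtain ⟨y2, hy2⟩ := exists_vm2 (s' 2) (hv' 2)
  have hcheck := ncgCore x0 x1 x2 y0 y1 y2
  rw [hx0, hx1, hx2, hy0, hy1, hy2] at hcheck
  have hconn := conn_to_connm s hc
  have hconn' := conn_to_connm s' hc'
  have hmasks : (encS (s 0) == encS (s' 0) && (encS (s 1) == encS (s' 1))
      && (encS (s 2) == encS (s' 2))) = false := by
    rw [Bool.eq_false_iff]
    intro h
    simp only [Bool.and_eq_true, beq_iff_eq] at h
    apply hne
    funext i
    fin_cases i
    · exact (encS_inj _ _ h.1.1).symm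
    · exact (encS_inj _ _ h.1.2).symm
    · exact (encS_inj _ _ h.2).symm
  rw [ncgCheck, hconn, hconn', hmasks] at hcheck
  simp only [Bool.and_true, Bool.and_false, Bool.not_false, Bool.true_and, Bool.true_or,
    Bool.false_or, Bool.not_true, Bool.and_self] at hcheck
  rw [pairData] at hcheck
  rw [List.any_eq_true] at hcheck
  obtain ⟨l, _, hcert⟩ := hcheck
  -- per-player real inequalities
  have hp0 : (((if encS (s 0) == encS (s' 0) then 0 else (cardm (encS (s' 0)) : ℤ) - cardm (encS (s 0))) : ℤ) : ℝ) * α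
      + (((if encS (s 0) == encS (s' 0) then -1 else (rowm (encS (s' 0)) (encS (s' 1)) (encS (s' 2)) 0 : ℤ) - rowm (encS (s 0)) (encS (s 1)) (encS (s 2)) 0) : ℤ) : ℝ) < 0 := by
    by_cases h : s 0 = s' 0
    · rw [maskbeq_true h]; norm_num
    · rw [maskbeq_false h]
      have hlt := hdev 0 (Ne.symm h)
      rw [cost_eq α s' hc' 0, cost_eq α s hc 0] at hlt
      rw [ofReal_cast_lt α hα0] at hlt
      simp only [Fin.val_zero] at hlt
      simp only [Bool.false_eq_true, if_false]
      push_cast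
      linarith
  have hp1 : (((if encS (s 1) == encS (s' 1) then 0 else (cardm (encS (s' 1)) : ℤ) - cardm (encS (s 1))) : ℤ) : ℝ) * α
      + (((if encS (s 1) == encS (s' 1) then -1 else (rowm (encS (s' 0)) (encS (s' 1)) (encS (s' 2)) 1 : ℤ) - rowm (encS (s 0)) (encS (s 1)) (encS (s 2)) 1) : ℤ) : ℝ) < 0 := by
    by_cases h : s 1 = s' 1
    · rw [maskbeq_true h]; norm_num
    · rw [maskbeq_false h]
      have hlt := hdev 1 (Ne.symm h)
      rw [cost_eq α s' hc' 1, cost_eq α s hc 1] at hlt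
      rw [ofReal_cast_lt α hα0] at hlt
      simp only [Fin.val_one] at hlt
      simp only [Bool.false_eq_true, if_false]
      push_cast
      linarith
  have hp2 : (((if encS (s 2) == encS (s' 2) then 0 else (cardm (encS (s' 2)) : ℤ) - cardm (encS (s 2))) : ℤ) : ℝ) * α
      + (((if encS (s 2) == encS (s' 2) then -1 else (rowm (encS (s' 0)) (encS (s' 1)) (encS (s' 2)) 2 : ℤ) - rowm (encS (s 0)) (encS (s 1)) (encS (s 2)) 2) : ℤ) : ℝ) < 0 := by
    by_cases h : s 2 = s' 2
    · rw [maskbeq_true h]; norm_num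
    · rw [maskbeq_false h]
      have hlt := hdev 2 (Ne.symm h)
      rw [cost_eq α s' hc' 2, cost_eq α s hc 2] at hlt
      rw [ofReal_cast_lt α hα0] at hlt
      simp only [Fin.val_two] at hlt
      simp only [Bool.false_eq_true, if_false]
      push_cast
      linarith
  have hfark := ncgFarkas α hα _ _ _ _ _ _ _ _ l hp0 hp1 hp2 hcert
  rw [Phi_eq α s' hc', Phi_eq α s hc]
  rw [ofReal_cast_lt α hα0]
  push_cast at hfark ⊢
  linarith

lemma connected_of_cost_ne_top {α : ℝ} {s : Profile 3} {i : Fin 3} (h : cost α s i ≠ ⊤) :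
    (NCGraph s).Connected := by
  rw [connected_iff_exists_forall_reachable]
  refine ⟨i, fun j => ?_⟩
  have hd : dCost s i ≠ ⊤ := by
    intro ht; apply h; rw [cost, ht, add_top]
  rw [dCost] at hd
  have hterm : ((NCGraph s).edist i j : ℝ≥0∞) ≠ ⊤ := by
    intro ht; apply hd
    exact ENNReal.sum_eq_top.mpr ⟨j, mem_univ j, ht⟩
  have : (NCGraph s).edist i j ≠ ⊤ := by
    intro ht; apply hterm; rw [ht]; rfl
  exact edist_ne_top_iff_reachable.mp this

/-- For `α > 1` and `n = 3`: `Φ` strictly decreases along every profitable coalitional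
deviation between connected profiles, and every coalitional improvement path is finite. -/
theorem stmt17 (α : ℝ) (hα : 1 < α) :
    (∀ s s' : Profile 3, Valid s → (NCGraph s).Connected → (NCGraph s').Connected →
      CoalStep α s s' → Phi α s' < Phi α s) ∧
    ¬∃ f : ℕ → Profile 3, Valid (f 0) ∧ ∀ k, CoalStep α (f k) (f (k + 1)) := by
  constructor
  · rintro s s' hvs hcs hcs' ⟨hvs', hne, hdev⟩
    exact ncgBridge α hα s s' hvs hvs' hcs hcs' hne hdev
  · rintro ⟨f, hv0, hstep⟩
    have hvalid : ∀ k, Valid (f k) := by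
      intro k; cases k with
      | zero => exact hv0
      | succ n => exact (hstep n).1
    have hconn : ∀ k, (NCGraph (f (k + 1))).Connected := by
      intro k
      obtain ⟨hv', hne, hdev⟩ := hstep k
      obtain ⟨i, hi⟩ := Function.ne_iff.mp hne
      exact connected_of_cost_ne_top (lt_of_lt_of_le (hdev i hi) le_top).ne
    have hdec : ∀ k, Phi α (f (k + 1 + 1)) < Phi α (f (k + 1)) := by
      intro k
      obtain ⟨hv', hne, hdev⟩ := hstep (k + 1)
      exact ncgBridge α hα (f (k + 1)) (f (k + 1 + 1)) (hvalid (k + 1)) hv' (hconn k) (hconn (k + 1))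
        hne hdev
    have hsa : StrictAnti (fun k => Phi α (f (k + 1))) := strictAnti_nat_of_succ_lt hdec
    obtain ⟨k, l, hkl, hfe⟩ := Finite.exists_ne_map_eq_of_infinite (fun k : ℕ => f (k + 1))
    have hfe' : Phi α (f (k + 1)) = Phi α (f (l + 1)) := by rw [hfe]
    rcases hkl.lt_or_gt with h | h
    · exact absurd hfe'.symm (hsa h).ne
    · exact absurd hfe' (hsa h).ne
end
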